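/- Every map in S(A) is of the form β^k(1_A) for some k ≥ 0, or is a composition of maps of the form β^k(s) where s is an elementary selection and k ≥ 0. -/

import Mathlib

/-- An abstract simplicial complex: a family of finite nonempty sets closed under
taking nonempty subsets. -/
def IsComplex {V : Type*} (C : Set (Finset V)) : Prop :=
  (∀ σ ∈ C, σ.Nonempty) ∧ ∀ σ ∈ C, ∀ τ : Finset V, τ ⊆ σ → τ.Nonempty → τ ∈ C

/-- The barycentric subdivision of `C`: vertices are the faces of `C`, and faces
are the nonempty finite chains of faces of `C` under inclusion. -/
def bary {V : Type*} (C : Set (Finset V)) : Set (Finset (Finset V)) :=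
  { S | S.Nonempty ∧ (↑S : Set (Finset V)) ⊆ C ∧ IsChain (· ⊆ ·) (↑S : Set (Finset V)) }

/-- `f` is a simplicial map from `C` to `D`: the image of every face of `C` is a face of `D`. -/
def IsSimplicial {V W : Type*} [DecidableEq W]
    (C : Set (Finset V)) (D : Set (Finset W)) (f : V → W) : Prop :=
  ∀ σ ∈ C, σ.image f ∈ D


universe u

/-- The vertex type of the `n`-fold iterated barycentric subdivision of a complex
on vertex type `V`. -/
def IterV (V : Type u) : ℕ → Type u
  | 0 => V
  | n + 1 => Finset (IterV V n)

instance iterVDecEq {V : Type u} [DecidableEq V] : ∀ n, DecidableEq (IterV V n)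
  | 0 => inferInstanceAs (DecidableEq V)
  | n + 1 =>
    haveI := iterVDecEq (V := V) n
    inferInstanceAs (DecidableEq (Finset (IterV V n)))

/-- The `n`-fold iterated barycentric subdivision `β^n A`. -/
def iterBary {V : Type u} (A : Set (Finset V)) : (n : ℕ) → Set (Finset (IterV V n))
  | 0 => A
  | n + 1 => bary (iterBary A n)

/-- The category `S(A)` of selections on `A`: the smallest family of simplicial maps among
iterated barycentric subdivisions `β^k A` containing all elementary selections
`β^{k+1}A → β^k A` and the identity `1_A`, closed under composition and under the
barycentric-subdivision operation `f ↦ βf`. -/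
inductive Sel {V : Type u} [DecidableEq V] (A : Set (Finset V)) :
    (l k : ℕ) → (IterV V l → IterV V k) → Prop
  | elem (k : ℕ) (s : IterV V (k + 1) → IterV V k)
      (hs : ∀ σ ∈ iterBary A k, s σ ∈ σ) : Sel A (k + 1) k s
  | id : Sel A 0 0 (fun x => x)
  | comp {l m k : ℕ} {f : IterV V m → IterV V k} {g : IterV V l → IterV V m} :
      Sel A m k f → Sel A l m g → Sel A l k (f ∘ g)
  | bary {l k : ℕ} {f : IterV V l → IterV V k} :
      Sel A l k f → Sel A (l + 1) (k + 1) (fun σ => Finset.image f σ)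

/-- `β^k(1_A)`: the `k`-fold barycentric subdivision of the identity map on `A`. -/
def idIter (V : Type u) [DecidableEq V] : (k : ℕ) → IterV V k → IterV V k
  | 0 => fun x => x
  | k + 1 => fun σ => Finset.image (idIter V k) σ

/-- `β^j(f)`: the `j`-fold barycentric subdivision of a simplicial map `f`. -/
def baryPow {V : Type u} [DecidableEq V] {l k : ℕ} (f : IterV V l → IterV V k) :
    (j : ℕ) → IterV V (l + j) → IterV V (k + j)
  | 0 => f
  | j + 1 => fun σ => Finset.image (baryPow f j) σ

/-- Compositions of maps of the form `β^j(s)`, `s` an elementary selection. -/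
inductive SelCompPow {V : Type u} [DecidableEq V] (A : Set (Finset V)) :
    (l k : ℕ) → (IterV V l → IterV V k) → Prop
  | pow (k j : ℕ) (s : IterV V (k + 1) → IterV V k)
      (hs : ∀ σ ∈ iterBary A k, s σ ∈ σ) :
      SelCompPow A (k + 1 + j) (k + j) (baryPow s j)
  | comp {l m k : ℕ} {f : IterV V m → IterV V k} {g : IterV V l → IterV V m} :
      SelCompPow A m k f → SelCompPow A l m g → SelCompPow A l k (f ∘ g)

theorem idIter_eq (V : Type u) [DecidableEq V] : ∀ (k : ℕ) (x : IterV V k),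
    idIter V k x = x
  | 0, _ => rfl
  | k + 1, σ => by
    show Finset.image (idIter V k) σ = σ
    have : idIter V k = id := funext (idIter_eq V k)
    rw [this]; exact Finset.image_id

theorem selCompPow_bary {V : Type u} [DecidableEq V] {A : Set (Finset V)}
    {l k : ℕ} {f : IterV V l → IterV V k} (h : SelCompPow A l k f) :
    SelCompPow A (l + 1) (k + 1) (fun σ => Finset.image f σ) := by
  induction h with
  | pow k j s hs => exact SelCompPow.pow k (j + 1) s hs
  | @comp l m k f g hf hg ihf ihg =>
    have heq : (fun σ => Finset.image (f ∘ g) σ) =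
        (fun σ => Finset.image f σ) ∘ (fun σ => Finset.image g σ) := by
      funext σ
      exact (Finset.image_image).symm
    exact heq ▸ SelCompPow.comp ihf ihg

/-- Every map in `S(A)` is of the form `β^j(1_A)` for some `j ≥ 0`, or is a composition of
maps of the form `β^j(s)` where `s` is an elementary selection and `j ≥ 0`. -/
theorem sel_normal_form {V : Type u} [DecidableEq V] {A : Set (Finset V)}
    (hA : IsComplex A) (hfin : A.Finite)
    {l k : ℕ} {f : IterV V l → IterV V k} (h : Sel A l k f) :
    (∃ j : ℕ, l = j ∧ k = j ∧ HEq f (idIter V j)) ∨ SelCompPow A l k f := by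
  induction h with
  | elem k s hs => exact Or.inr (SelCompPow.pow k 0 s hs)
  | id => exact Or.inl ⟨0, rfl, rfl, HEq.rfl⟩
  | @comp l m k f g hf hg ihf ihg =>
    rcases ihf with ⟨j, hm, hk, hf'⟩ | hf'
    · subst hm; subst hk
      have hfe := eq_of_heq hf'
      rcases ihg with ⟨j', hl, hm', hg'⟩ | hg'
      · subst hl; subst hm'
        have hge := eq_of_heq hg'
        refine Or.inl ⟨_, rfl, rfl, heq_of_eq ?_⟩
        funext x
        simp [hfe, hge, Function.comp, idIter_eq]
      · right
        have hfg : f ∘ g = g := by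
          funext x
          simp [hfe, Function.comp, idIter_eq]
        rw [hfg]; exact hg'
    · rcases ihg with ⟨j', hl, hm', hg'⟩ | hg'
      · subst hl; subst hm'
        have hge := eq_of_heq hg'
        right
        have hfg : f ∘ g = f := by
          funext x
          simp [hge, Function.comp, idIter_eq]
        rw [hfg]; exact hf'
      · exact Or.inr (SelCompPow.comp hf' hg')
  | @bary l k f hf ih =>
    rcases ih with ⟨j, hl, hk, hf'⟩ | hf'
    · subst hl; subst hk
      have hfe := eq_of_heq hf'
      exact Or.inl ⟨_ + 1, rfl, rfl, heq_of_eq (by rw [hfe]; rfl)⟩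
    · exact Or.inr (selCompPow_bary hf')
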